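/- Let B be a bicategory and W a class of arrows satisfying [WB1]–[WB5] whose arrows are all co-full (every 2-cell α : f∘w ⇒ g∘w with w ∈ W factors as α′∘w for some α′ : f ⇒ g). Then every 2-cell of the bicategory of fractions B(W⁻¹) between spans (u₁, f₁) and (u₂, f₂) can be represented by a diagram whose left-hand invertible 2-cell is any prescribed square γ : u₁∘t₁ ⇒ u₂∘t₂ with u₁∘t₁ ∈ W. -/

import Mathlib

open CategoryTheory Bicategory

universe w v u

/-- A class of 1-morphisms in a bicategory. -/
def WClass (B : Type u) [Bicategory.{w, v} B] :=
  ∀ ⦃a b : B⦄, (a ⟶ b) → Prop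

namespace WClass

variable {B : Type u} [Bicategory.{w, v} B]

/-- [WB1]: all identities are in `W`. -/
def WB1 (W : WClass B) : Prop := ∀ a : B, W (𝟙 a)

/-- [WB2]: for composable arrows of `W` there is a pre-composition landing in `W`. -/
def WB2 (W : WClass B) : Prop :=
  ∀ ⦃a b c : B⦄ (vm : a ⟶ b) (wm : b ⟶ c), W vm → W wm →
    ∃ (a' : B) (u : a' ⟶ a), W (u ≫ vm ≫ wm)

/-- [WB3]: squares with invertible fillers over cospans with one leg in `W`. -/
def WB3 (W : WClass B) : Prop :=
  ∀ ⦃a b c : B⦄ (wm : a ⟶ b) (f : c ⟶ b), W wm →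
    ∃ (d : B) (h : d ⟶ a) (vm : d ⟶ c), W vm ∧ Nonempty (h ≫ wm ≅ vm ≫ f)

/-- `β` is a lifting of the 2-cell `η : f ≫ wm ⟶ g ≫ wm` along `wm`, via `u`. -/
def IsLift ⦃a b c : B⦄ (f g : a ⟶ b) (wm : b ⟶ c) (η : f ≫ wm ⟶ g ≫ wm)
    ⦃a' : B⦄ (u : a' ⟶ a) (β : u ≫ f ⟶ u ≫ g) : Prop :=
  β ▷ wm = (α_ u f wm).hom ≫ u ◁ η ≫ (α_ u g wm).inv

/-- [WB4]: existence of liftings of 2-cells along arrows of `W`, together with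
the compatibility of any two such liftings. -/
def WB4 (W : WClass B) : Prop :=
  (∀ ⦃a b c : B⦄ (f g : a ⟶ b) (wm : b ⟶ c), W wm → ∀ η : f ≫ wm ⟶ g ≫ wm,
    ∃ (a' : B) (u : a' ⟶ a), W u ∧ ∃ β : u ≫ f ⟶ u ≫ g, IsLift f g wm η u β) ∧
  (∀ ⦃a b c : B⦄ (f g : a ⟶ b) (wm : b ⟶ c), W wm → ∀ η : f ≫ wm ⟶ g ≫ wm,
    ∀ ⦃a₁ : B⦄ (u₁ : a₁ ⟶ a) (β₁ : u₁ ≫ f ⟶ u₁ ≫ g), W u₁ → IsLift f g wm η u₁ β₁ →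
      ∀ ⦃a₂ : B⦄ (u₂ : a₂ ⟶ a) (β₂ : u₂ ≫ f ⟶ u₂ ≫ g), W u₂ → IsLift f g wm η u₂ β₂ →
        ∃ (d : B) (s : d ⟶ a₁) (t : d ⟶ a₂), W (s ≫ u₁) ∧ W (t ≫ u₂) ∧
          ∃ ε₀ : s ≫ u₁ ≅ t ≫ u₂,
            ((α_ s u₁ f).hom ≫ s ◁ β₁ ≫ (α_ s u₁ g).inv) ≫ ε₀.hom ▷ g =
              ε₀.hom ▷ f ≫ (α_ t u₂ f).hom ≫ t ◁ β₂ ≫ (α_ t u₂ g).inv)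

/-- [WB5]: `W` is closed under invertible 2-cells. -/
def WB5 (W : WClass B) : Prop :=
  ∀ ⦃a b : B⦄ (vm wm : a ⟶ b), W wm → Nonempty (vm ≅ wm) → W vm

end WClass

/-- A 1-morphism `wm` is co-fully-faithful if every 2-cell `wm ≫ f ⟶ wm ≫ g`
factors uniquely through right whiskering by `wm`. -/
def CoFF {B : Type u} [Bicategory.{w, v} B] ⦃a b : B⦄ (wm : a ⟶ b) : Prop :=
  ∀ ⦃c : B⦄ (f g : b ⟶ c) (η : wm ≫ f ⟶ wm ≫ g), ∃! η' : f ⟶ g, wm ◁ η' = η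

/-- A 1-morphism `wm` is co-full if every 2-cell `wm ≫ f ⟶ wm ≫ g`
factors (not necessarily uniquely) through right whiskering by `wm`. -/
def CoFull {B : Type u} [Bicategory.{w, v} B] ⦃a b : B⦄ (wm : a ⟶ b) : Prop :=
  ∀ ⦃c : B⦄ (f g : b ⟶ c) (η : wm ≫ f ⟶ wm ≫ g), ∃ η' : f ⟶ g, wm ◁ η' = η

/-- Equivalence of 2-cell diagrams between the spans `(u₁, f₁)` and `(u₂, f₂)` in the
construction of the bicategory of fractions: the diagram `(v₁, v₂, αc, β)` is equivalent
to the diagram `(v₁', v₂', αc', β')` when there is a common refinement `s, t` with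
invertible comparison 2-cells `ε₁, ε₂`, the relevant composite in `W`, satisfying the
two pasting equations. -/
def DiagEquiv {B : Type u} [Bicategory.{w, v} B] (W : WClass B)
    {a b c₁ c₂ : B} (u₁ : c₁ ⟶ a) (f₁ : c₁ ⟶ b) (u₂ : c₂ ⟶ a) (f₂ : c₂ ⟶ b)
    {d : B} (v₁ : d ⟶ c₁) (v₂ : d ⟶ c₂)
    (αc : v₁ ≫ u₁ ≅ v₂ ≫ u₂) (β : v₁ ≫ f₁ ⟶ v₂ ≫ f₂)
    {d' : B} (v₁' : d' ⟶ c₁) (v₂' : d' ⟶ c₂)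
    (αc' : v₁' ≫ u₁ ≅ v₂' ≫ u₂) (β' : v₁' ≫ f₁ ⟶ v₂' ≫ f₂) : Prop :=
  ∃ (e : B) (s : e ⟶ d) (t : e ⟶ d'),
    W ((s ≫ v₁) ≫ u₁) ∧
    ∃ (ε₁ : s ≫ v₁ ≅ t ≫ v₁') (ε₂ : s ≫ v₂ ≅ t ≫ v₂'),
      (ε₁.hom ▷ u₁ ≫ (α_ t v₁' u₁).hom ≫ t ◁ αc'.hom ≫ (α_ t v₂' u₂).inv =
        (α_ s v₁ u₁).hom ≫ s ◁ αc.hom ≫ (α_ s v₂ u₂).inv ≫ ε₂.hom ▷ u₂) ∧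
      (ε₁.hom ▷ f₁ ≫ (α_ t v₁' f₁).hom ≫ t ◁ β' ≫ (α_ t v₂' f₂).inv =
        (α_ s v₁ f₁).hom ≫ s ◁ β ≫ (α_ s v₂ f₂).inv ≫ ε₂.hom ▷ f₂)

section Frac
variable {B : Type u} [Bicategory.{w, v} B] {W : WClass B}

/-- `K` can be pre-composed into `W`. -/
def PreW (W : WClass B) {x y : B} (K : x ⟶ y) : Prop :=
  ∃ (c : B) (H : c ⟶ x), W (H ≫ K)

lemma preW_of_W (h5 : W.WB5) {x y : B} {K : x ⟶ y} (hK : W K) : PreW W K :=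
  ⟨x, 𝟙 x, h5 _ _ hK ⟨leftUnitor K⟩⟩

lemma preW_iso (h5 : W.WB5) {x y : B} {K K' : x ⟶ y} (e : K' ≅ K) (h : PreW W K) :
    PreW W K' := by
  obtain ⟨c, H, hH⟩ := h
  exact ⟨c, H, h5 _ _ hH ⟨whiskerLeftIso H e⟩⟩

lemma preW_comp (h2 : W.WB2) (h3 : W.WB3) (h5 : W.WB5) {x y z : B} {wm : x ⟶ y}
    {K : y ⟶ z} (hw : W wm) (hK : PreW W K) : PreW W (wm ≫ K) := by
  obtain ⟨c, H, hH⟩ := hK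
  obtain ⟨d, h', vm', hvm', ⟨κ⟩⟩ := h3 wm H hw
  obtain ⟨p, u', hu'⟩ := h2 vm' (H ≫ K) hvm' hH
  refine ⟨p, u' ≫ h', h5 _ _ hu' ⟨?_⟩⟩
  exact α_ u' h' (wm ≫ K) ≪≫ whiskerLeftIso u'
    ((α_ h' wm K).symm ≪≫ whiskerRightIso κ K ≪≫ α_ vm' H K)

lemma coFull_comp {x y z : B} {f : x ⟶ y} {g : y ⟶ z} (hf : CoFull f) (hg : CoFull g) :
    CoFull (f ≫ g) := by
  intro c p q η
  obtain ⟨δ₁, hδ₁⟩ := hf (g ≫ p) (g ≫ q) ((α_ f g p).inv ≫ η ≫ (α_ f g q).hom)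
  obtain ⟨δ, hδ⟩ := hg p q δ₁
  refine ⟨δ, ?_⟩
  rw [comp_whiskerLeft, hδ, hδ₁]
  simp

lemma coFull_iso {x y : B} {f f' : x ⟶ y} (e : f ≅ f') (hf' : CoFull f') : CoFull f := by
  intro c p q η
  obtain ⟨δ, hδ⟩ := hf' p q (e.inv ▷ p ≫ η ≫ e.hom ▷ q)
  refine ⟨δ, ?_⟩
  have hex := whisker_exchange e.hom δ
  rw [hδ] at hex
  calc f ◁ δ = (f ◁ δ ≫ e.hom ▷ q) ≫ e.inv ▷ q := by simp
    _ = η := by rw [hex]; simp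

/-- An arrow which is co-full and preserves prependability. -/
def Goodarr (W : WClass B) {x y : B} (r : x ⟶ y) : Prop :=
  CoFull r ∧ ∀ ⦃z : B⦄ (K : y ⟶ z), PreW W K → PreW W (r ≫ K)

lemma goodarr_of_W (h2 : W.WB2) (h3 : W.WB3) (h5 : W.WB5)
    (hcofull : ∀ ⦃a b : B⦄ (f : a ⟶ b), W f → CoFull f)
    {x y : B} {r : x ⟶ y} (hr : W r) : Goodarr W r :=
  ⟨hcofull r hr, fun _ K hK => preW_comp h2 h3 h5 hr hK⟩

lemma goodarr_comp (h5 : W.WB5) {x y z : B} {r : x ⟶ y} {r' : y ⟶ z}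
    (hr : Goodarr W r) (hr' : Goodarr W r') : Goodarr W (r ≫ r') := by
  refine ⟨coFull_comp hr.1 hr'.1, fun _ K hK => ?_⟩
  exact preW_iso h5 (α_ r r' K) (hr.2 _ (hr'.2 _ hK))

lemma goodarr_iso (h5 : W.WB5) {x y : B} {r r' : x ⟶ y} (e : r ≅ r')
    (hr' : Goodarr W r') : Goodarr W r := by
  refine ⟨coFull_iso e hr'.1, fun _ K hK => ?_⟩
  exact preW_iso h5 (whiskerRightIso e K) (hr'.2 _ hK)

end Frac
section Frac2
variable {B : Type u} [Bicategory.{w, v} B] {W : WClass B}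

lemma isLift_whisker {a b c a' a'' : B} {f g : a ⟶ b} {wm : b ⟶ c}
    {η : f ≫ wm ⟶ g ≫ wm} {u : a' ⟶ a} {β : u ≫ f ⟶ u ≫ g}
    (h : WClass.IsLift f g wm η u β) (vv : a'' ⟶ a') :
    WClass.IsLift f g wm η (vv ≫ u)
      ((α_ vv u f).hom ≫ vv ◁ β ≫ (α_ vv u g).inv) := by
  unfold WClass.IsLift at h ⊢
  simp only [comp_whiskerRight, whisker_assoc, h]
  bicategory

lemma isLift_transport {a b c a' : B} {f g : a ⟶ b} {wm : b ⟶ c}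
    {η : f ≫ wm ⟶ g ≫ wm} {u u' : a' ⟶ a} {β : u ≫ f ⟶ u ≫ g} (e : u' ≅ u)
    (h : WClass.IsLift f g wm η u β) :
    WClass.IsLift f g wm η u' (e.hom ▷ f ≫ β ≫ e.inv ▷ g) := by
  unfold WClass.IsLift at h ⊢
  simp only [comp_whiskerRight, h]
  calc (e.hom ▷ f) ▷ wm ≫ ((α_ u f wm).hom ≫ u ◁ η ≫ (α_ u g wm).inv) ≫ (e.inv ▷ g) ▷ wm
      = (α_ u' f wm).hom ≫ ((e.hom ▷ (f ≫ wm) ≫ u ◁ η) ≫ e.inv ▷ (g ≫ wm)) ≫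
        (α_ u' g wm).inv := by bicategory
    _ = (α_ u' f wm).hom ≫ ((u' ◁ η ≫ e.hom ▷ (g ≫ wm)) ≫ e.inv ▷ (g ≫ wm)) ≫
        (α_ u' g wm).inv := by rw [whisker_exchange]
    _ = (α_ u' f wm).hom ≫ u' ◁ η ≫ (α_ u' g wm).inv := by
        simp [← comp_whiskerRight]

lemma isLift_cancel {a b c a' : B} {f g : a ⟶ b} {wm : b ⟶ c}
    {τ : f ≫ wm ⟶ g ≫ wm} {τ' : g ≫ wm ⟶ f ≫ wm} {u : a' ⟶ a}
    {β : u ≫ f ⟶ u ≫ g} {β' : u ≫ g ⟶ u ≫ f}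
    (h306 : τ ≫ τ' = 𝟙 _)
    (hB : WClass.IsLift f g wm τ u β) (hC : WClass.IsLift g f wm τ' u β') :
    (β ≫ β') ▷ wm = 𝟙 _ := by
  have key : u ◁ τ ≫ u ◁ τ' = 𝟙 _ := by
    rw [← Bicategory.whiskerLeft_comp, h306]; simp
  rw [comp_whiskerRight, hB, hC]
  simp [key, reassoc_of% key]

end Frac2
section Frac3
variable {B : Type u} [Bicategory.{w, v} B] {W : WClass B}

lemma cancel_refine (h1 : W.WB1) (h4 : W.WB4) {a b c : B} {f : a ⟶ b}
    {wm : b ⟶ c} (hw : W wm) {ψ : f ⟶ f} (hψ : ψ ▷ wm = 𝟙 _) :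
    ∃ (a' : B) (x : a' ⟶ a), W x ∧ x ◁ ψ = 𝟙 _ := by
  have l1 : WClass.IsLift f f wm (𝟙 (f ≫ wm)) (𝟙 a) (𝟙 (𝟙 a ≫ f)) := by
    unfold WClass.IsLift; simp
  have l2 : WClass.IsLift f f wm (𝟙 (f ≫ wm)) (𝟙 a) (𝟙 a ◁ ψ) := by
    unfold WClass.IsLift; rw [whisker_assoc, hψ]
  obtain ⟨d, s, t, hs, ht, ε₀, heq⟩ :=
    h4.2 f f wm hw (𝟙 _) (𝟙 a) (𝟙 _) (h1 a) l1 (𝟙 a) (𝟙 a ◁ ψ) (h1 a) l2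
  have heq' : ε₀.hom ▷ f = ε₀.hom ▷ f ≫
      ((α_ t (𝟙 a) f).hom ≫ t ◁ (𝟙 a ◁ ψ) ≫ (α_ t (𝟙 a) f).inv) := by
    simpa using heq
  have hm : (α_ t (𝟙 a) f).hom ≫ t ◁ (𝟙 a ◁ ψ) ≫ (α_ t (𝟙 a) f).inv = 𝟙 _ := by
    have : IsIso (ε₀.hom ▷ f) := inferInstance
    rw [← cancel_epi (ε₀.hom ▷ f), ← heq']
    simp
  refine ⟨d, t ≫ 𝟙 a, ht, ?_⟩
  rw [comp_whiskerLeft]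
  exact hm

lemma iso_lift (h1 : W.WB1) (h2 : W.WB2) (h3 : W.WB3) (h4 : W.WB4) (h5 : W.WB5)
    (hcofull : ∀ ⦃a b : B⦄ (f : a ⟶ b), W f → CoFull f)
    {a b c : B} (f g : a ⟶ b) (wm : b ⟶ c) (hw : W wm) (θ : f ≫ wm ≅ g ≫ wm) :
    ∃ (a' : B) (r : a' ⟶ a), Goodarr W r ∧
      ∃ μ : r ≫ f ≅ r ≫ g, WClass.IsLift f g wm θ.hom r μ.hom := by
  obtain ⟨a₁, r₁, hr₁, β₁, L₁⟩ := h4.1 f g wm hw θ.hom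
  obtain ⟨a₂, r₂, hr₂, β₂, L₂⟩ := h4.1 g f wm hw θ.inv
  obtain ⟨d', h', vm', hvm', ⟨κ⟩⟩ := h3 r₂ r₁ hr₂
  -- h' : d' ⟶ a₂, vm' : d' ⟶ a₁, κ : h' ≫ r₂ ≅ vm' ≫ r₁
  set P : d' ⟶ a := vm' ≫ r₁ with hP
  set Bc : P ≫ f ⟶ P ≫ g := (α_ vm' r₁ f).hom ≫ vm' ◁ β₁ ≫ (α_ vm' r₁ g).inv with hBc
  have LB : WClass.IsLift f g wm θ.hom P Bc := isLift_whisker L₁ vm'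
  have LC0 : WClass.IsLift g f wm θ.inv (h' ≫ r₂)
      ((α_ h' r₂ g).hom ≫ h' ◁ β₂ ≫ (α_ h' r₂ f).inv) := isLift_whisker L₂ h'
  set Cc : P ≫ g ⟶ P ≫ f :=
    κ.symm.hom ▷ g ≫ ((α_ h' r₂ g).hom ≫ h' ◁ β₂ ≫ (α_ h' r₂ f).inv) ≫ κ.symm.inv ▷ f
    with hCc
  have LC : WClass.IsLift g f wm θ.inv P Cc := isLift_transport κ.symm LC0
  have hBC : (Bc ≫ Cc) ▷ wm = 𝟙 _ := isLift_cancel θ.hom_inv_id LB LC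
  have hCB : (Cc ≫ Bc) ▷ wm = 𝟙 _ := isLift_cancel θ.inv_hom_id LC LB
  obtain ⟨x₀, x, hx, hxB⟩ := cancel_refine h1 h4 hw hBC
  obtain ⟨y₀, y, hy, hyC⟩ := cancel_refine h1 h4 hw hCB
  obtain ⟨d₃, h₃, vm₃, hvm₃, ⟨κ₃⟩⟩ := h3 x y hx
  -- h₃ : d₃ ⟶ x₀, vm₃ : d₃ ⟶ y₀, κ₃ : h₃ ≫ x ≅ vm₃ ≫ y
  set Z : d₃ ⟶ d' := vm₃ ≫ y with hZ
  have hZgood : Goodarr W Z :=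
    goodarr_comp h5 (goodarr_of_W h2 h3 h5 hcofull hvm₃) (goodarr_of_W h2 h3 h5 hcofull hy)
  have hZBC : Z ◁ (Bc ≫ Cc) = 𝟙 _ := by
    have hex := whisker_exchange κ₃.hom (Bc ≫ Cc)
    -- (h₃ ≫ x) ◁ (Bc ≫ Cc) ≫ κ₃.hom ▷ _ = κ₃.hom ▷ _ ≫ Z ◁ (Bc ≫ Cc)
    have hhx : (h₃ ≫ x) ◁ (Bc ≫ Cc) = 𝟙 _ := by
      rw [comp_whiskerLeft, hxB]; simp
    rw [hhx] at hex
    have : IsIso (κ₃.hom ▷ (P ≫ f)) := inferInstance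
    rw [← cancel_epi (κ₃.hom ▷ (P ≫ f))]
    simpa using hex.symm
  have hZCB : Z ◁ (Cc ≫ Bc) = 𝟙 _ := by
    rw [hZ, comp_whiskerLeft, hyC]; simp
  have hZB2 : Z ◁ Bc ≫ Z ◁ Cc = 𝟙 _ := by
    rw [← Bicategory.whiskerLeft_comp, hZBC]
  have hZC2 : Z ◁ Cc ≫ Z ◁ Bc = 𝟙 _ := by
    rw [← Bicategory.whiskerLeft_comp, hZCB]
  refine ⟨d₃, Z ≫ P,
    goodarr_comp h5 hZgood
      (goodarr_comp h5 (goodarr_of_W h2 h3 h5 hcofull hvm') (goodarr_of_W h2 h3 h5 hcofull hr₁)),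
    ⟨(α_ Z P f).hom ≫ Z ◁ Bc ≫ (α_ Z P g).inv,
     (α_ Z P g).hom ≫ Z ◁ Cc ≫ (α_ Z P f).inv, ?_, ?_⟩, ?_⟩
  · simp [reassoc_of% hZB2, hZB2]
  · simp [reassoc_of% hZC2, hZC2]
  · exact isLift_whisker LB Z

end Frac3
section Frac4
variable {B : Type u} [Bicategory.{w, v} B] {W : WClass B}

lemma refine_eq {a c₁ c₂ d e e' e'' : B} (U : e'' ⟶ e') {s : e' ⟶ d} {t : e' ⟶ e}
    {v₁ : d ⟶ c₁} {v₂ : d ⟶ c₂} {t₁ : e ⟶ c₁} {t₂ : e ⟶ c₂} {u₁ : c₁ ⟶ a} {u₂ : c₂ ⟶ a}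
    {ac : v₁ ≫ u₁ ⟶ v₂ ≫ u₂} {g : t₁ ≫ u₁ ⟶ t₂ ≫ u₂}
    (ε₁ : s ≫ v₁ ≅ t ≫ t₁) (ε₂ : s ≫ v₂ ≅ t ≫ t₂)
    (E : ε₁.hom ▷ u₁ ≫ (α_ t t₁ u₁).hom ≫ t ◁ g ≫ (α_ t t₂ u₂).inv =
        (α_ s v₁ u₁).hom ≫ s ◁ ac ≫ (α_ s v₂ u₂).inv ≫ ε₂.hom ▷ u₂) :
    (α_ U s v₁ ≪≫ whiskerLeftIso U ε₁ ≪≫ (α_ U t t₁).symm).hom ▷ u₁ ≫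
        (α_ (U ≫ t) t₁ u₁).hom ≫ (U ≫ t) ◁ g ≫ (α_ (U ≫ t) t₂ u₂).inv =
      (α_ (U ≫ s) v₁ u₁).hom ≫ (U ≫ s) ◁ ac ≫ (α_ (U ≫ s) v₂ u₂).inv ≫
        (α_ U s v₂ ≪≫ whiskerLeftIso U ε₂ ≪≫ (α_ U t t₂).symm).hom ▷ u₂ := by
  calc (α_ U s v₁ ≪≫ whiskerLeftIso U ε₁ ≪≫ (α_ U t t₁).symm).hom ▷ u₁ ≫
        (α_ (U ≫ t) t₁ u₁).hom ≫ (U ≫ t) ◁ g ≫ (α_ (U ≫ t) t₂ u₂).inv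
      = (α_ U s v₁).hom ▷ u₁ ≫ (α_ U (s ≫ v₁) u₁).hom ≫
          U ◁ (ε₁.hom ▷ u₁ ≫ (α_ t t₁ u₁).hom ≫ t ◁ g ≫ (α_ t t₂ u₂).inv) ≫
          (α_ U (t ≫ t₂) u₂).inv ≫ (α_ U t t₂).inv ▷ u₂ := by
        simp only [Iso.trans_hom, whiskerLeftIso_hom, Iso.symm_hom, comp_whiskerRight,
          Bicategory.whiskerLeft_comp]
        bicategory
    _ = (α_ U s v₁).hom ▷ u₁ ≫ (α_ U (s ≫ v₁) u₁).hom ≫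
          U ◁ ((α_ s v₁ u₁).hom ≫ s ◁ ac ≫ (α_ s v₂ u₂).inv ≫ ε₂.hom ▷ u₂) ≫
          (α_ U (t ≫ t₂) u₂).inv ≫ (α_ U t t₂).inv ▷ u₂ := by rw [E]
    _ = (α_ (U ≫ s) v₁ u₁).hom ≫ (U ≫ s) ◁ ac ≫ (α_ (U ≫ s) v₂ u₂).inv ≫
        (α_ U s v₂ ≪≫ whiskerLeftIso U ε₂ ≪≫ (α_ U t t₂).symm).hom ▷ u₂ := by
        simp only [Iso.trans_hom, whiskerLeftIso_hom, Iso.symm_hom, comp_whiskerRight,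
          Bicategory.whiskerLeft_comp]
        bicategory

end Frac4
section Frac5
variable {B : Type u} [Bicategory.{w, v} B] {W : WClass B}

lemma core_E1 {a c₁ c₂ d e z z₁ z₂ : B}
    (u₁ : c₁ ⟶ a) (u₂ : c₂ ⟶ a) (v₁ : d ⟶ c₁) (v₂ : d ⟶ c₂) (t₁ : e ⟶ c₁) (t₂ : e ⟶ c₂)
    (αc : v₁ ≫ u₁ ≅ v₂ ≫ u₂) (γ : t₁ ≫ u₁ ≅ t₂ ≫ u₂)
    (p : z ⟶ d) (q : z ⟶ e) (r : z₁ ⟶ z) (r' : z₂ ⟶ z₁)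
    (μ₁ : r ≫ (p ≫ v₁) ≅ r ≫ (q ≫ t₁))
    (μ₂ : r' ≫ (r ≫ (p ≫ v₂)) ≅ r' ≫ (r ≫ (q ≫ t₂)))
    (L : WClass.IsLift (r ≫ (p ≫ v₂)) (r ≫ (q ≫ t₂)) u₂
      (α_ r (p ≫ v₂) u₂ ≪≫
        whiskerLeftIso r (α_ p v₂ u₂ ≪≫ whiskerLeftIso p αc.symm ≪≫ (α_ p v₁ u₁).symm) ≪≫
        (α_ r (p ≫ v₁) u₁).symm ≪≫ whiskerRightIso μ₁ u₁ ≪≫ α_ r (q ≫ t₁) u₁ ≪≫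
        whiskerLeftIso r (α_ q t₁ u₁ ≪≫ whiskerLeftIso q γ ≪≫ (α_ q t₂ u₂).symm) ≪≫
        (α_ r (q ≫ t₂) u₂).symm).hom r' μ₂.hom) :
    (α_ r' (r ≫ p) v₁ ≪≫ whiskerLeftIso r' (α_ r p v₁) ≪≫ whiskerLeftIso r' μ₁ ≪≫
        whiskerLeftIso r' (α_ r q t₁).symm ≪≫ (α_ r' (r ≫ q) t₁).symm).hom ▷ u₁ ≫
      (α_ (r' ≫ r ≫ q) t₁ u₁).hom ≫ (r' ≫ r ≫ q) ◁ γ.hom ≫ (α_ (r' ≫ r ≫ q) t₂ u₂).inv =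
    (α_ (r' ≫ r ≫ p) v₁ u₁).hom ≫ (r' ≫ r ≫ p) ◁ αc.hom ≫ (α_ (r' ≫ r ≫ p) v₂ u₂).inv ≫
      (α_ r' (r ≫ p) v₂ ≪≫ whiskerLeftIso r' (α_ r p v₂) ≪≫ μ₂ ≪≫
        whiskerLeftIso r' (α_ r q t₂).symm ≪≫ (α_ r' (r ≫ q) t₂).symm).hom ▷ u₂ := by
  have key : (α_ r' (r ≫ p) v₂ ≪≫ whiskerLeftIso r' (α_ r p v₂) ≪≫ μ₂ ≪≫
      whiskerLeftIso r' (α_ r q t₂).symm ≪≫ (α_ r' (r ≫ q) t₂).symm).hom ▷ u₂ =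
      (α_ (r' ≫ r ≫ p) v₂ u₂).hom ≫ (r' ≫ r ≫ p) ◁ αc.inv ≫ (α_ (r' ≫ r ≫ p) v₁ u₁).inv ≫
      (α_ r' (r ≫ p) v₁ ≪≫ whiskerLeftIso r' (α_ r p v₁) ≪≫ whiskerLeftIso r' μ₁ ≪≫
        whiskerLeftIso r' (α_ r q t₁).symm ≪≫ (α_ r' (r ≫ q) t₁).symm).hom ▷ u₁ ≫
      (α_ (r' ≫ r ≫ q) t₁ u₁).hom ≫ (r' ≫ r ≫ q) ◁ γ.hom ≫ (α_ (r' ≫ r ≫ q) t₂ u₂).inv := by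
    unfold WClass.IsLift at L
    simp only [Iso.trans_hom, whiskerLeftIso_hom, Iso.symm_hom, whiskerRightIso_hom,
      comp_whiskerRight, Bicategory.whiskerLeft_comp] at L ⊢
    rw [L]
    bicategory
  rw [key]
  simp only [Iso.trans_hom, whiskerLeftIso_hom, Iso.symm_hom, comp_whiskerRight,
    Bicategory.whiskerLeft_comp, Category.assoc]
  simp only [Iso.inv_hom_id_assoc, whiskerLeft_hom_inv_assoc, Iso.hom_inv_id_assoc]

lemma lift3 {b e z z₁ z₂ : B} {r' : z₂ ⟶ z₁} {r : z₁ ⟶ z} {q : z ⟶ e}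
    (hr' : CoFull r') (hr : CoFull r) (hq : CoFull q) {X Y : e ⟶ b}
    (χ : (r' ≫ r ≫ q) ≫ X ⟶ (r' ≫ r ≫ q) ≫ Y) : ∃ δ : X ⟶ Y, (r' ≫ r ≫ q) ◁ δ = χ := by
  obtain ⟨δ₂, hδ₂⟩ := hr' ((r ≫ q) ≫ X) ((r ≫ q) ≫ Y)
    ((α_ r' (r ≫ q) X).inv ≫ χ ≫ (α_ r' (r ≫ q) Y).hom)
  obtain ⟨δ₁, hδ₁⟩ := hr (q ≫ X) (q ≫ Y) ((α_ r q X).inv ≫ δ₂ ≫ (α_ r q Y).hom)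
  obtain ⟨δ, hδ⟩ := hq X Y δ₁
  refine ⟨δ, ?_⟩
  have e1 : (r ≫ q) ◁ δ = δ₂ := by rw [comp_whiskerLeft, hδ, hδ₁]; simp
  rw [comp_whiskerLeft, e1, hδ₂]; simp

lemma core_E2 {b c₁ c₂ d e z₂ : B} {f₁ : c₁ ⟶ b} {f₂ : c₂ ⟶ b}
    {v₁ : d ⟶ c₁} {v₂ : d ⟶ c₂} {t₁ : e ⟶ c₁} {t₂ : e ⟶ c₂} {sL : z₂ ⟶ d} {tL : z₂ ⟶ e}
    (β : v₁ ≫ f₁ ⟶ v₂ ≫ f₂) (ε₁ : sL ≫ v₁ ≅ tL ≫ t₁) (ε₂ : sL ≫ v₂ ≅ tL ≫ t₂)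
    (δ : t₁ ≫ f₁ ⟶ t₂ ≫ f₂)
    (hδ : tL ◁ δ = (α_ tL t₁ f₁).inv ≫ ε₁.inv ▷ f₁ ≫ (α_ sL v₁ f₁).hom ≫ sL ◁ β ≫
      (α_ sL v₂ f₂).inv ≫ ε₂.hom ▷ f₂ ≫ (α_ tL t₂ f₂).hom) :
    ε₁.hom ▷ f₁ ≫ (α_ tL t₁ f₁).hom ≫ tL ◁ δ ≫ (α_ tL t₂ f₂).inv =
      (α_ sL v₁ f₁).hom ≫ sL ◁ β ≫ (α_ sL v₂ f₂).inv ≫ ε₂.hom ▷ f₂ := by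
  rw [hδ]; simp

lemma main_core (h1 : W.WB1) (h2 : W.WB2) (h3 : W.WB3) (h4 : W.WB4) (h5 : W.WB5)
    (hcofull : ∀ ⦃a b : B⦄ (f : a ⟶ b), W f → CoFull f)
    {a b c₁ c₂ d e : B} (u₁ : c₁ ⟶ a) (f₁ : c₁ ⟶ b) (u₂ : c₂ ⟶ a) (f₂ : c₂ ⟶ b)
    (hu₁ : W u₁) (hu₂ : W u₂)
    (v₁ : d ⟶ c₁) (v₂ : d ⟶ c₂) (hv : W (v₁ ≫ u₁))
    (αc : v₁ ≫ u₁ ≅ v₂ ≫ u₂) (β : v₁ ≫ f₁ ⟶ v₂ ≫ f₂)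
    (t₁ : e ⟶ c₁) (t₂ : e ⟶ c₂) (ht : W (t₁ ≫ u₁))
    (γ : t₁ ≫ u₁ ≅ t₂ ≫ u₂) :
    ∃ (δ : t₁ ≫ f₁ ⟶ t₂ ≫ f₂) (z₂ : B) (sL : z₂ ⟶ d) (tL : z₂ ⟶ e)
      (ε₁ : sL ≫ v₁ ≅ tL ≫ t₁) (ε₂ : sL ≫ v₂ ≅ tL ≫ t₂),
      PreW W ((sL ≫ v₁) ≫ u₁) ∧
      (ε₁.hom ▷ u₁ ≫ (α_ tL t₁ u₁).hom ≫ tL ◁ γ.hom ≫ (α_ tL t₂ u₂).inv =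
        (α_ sL v₁ u₁).hom ≫ sL ◁ αc.hom ≫ (α_ sL v₂ u₂).inv ≫ ε₂.hom ▷ u₂) ∧
      (ε₁.hom ▷ f₁ ≫ (α_ tL t₁ f₁).hom ≫ tL ◁ δ ≫ (α_ tL t₂ f₂).inv =
        (α_ sL v₁ f₁).hom ≫ sL ◁ β ≫ (α_ sL v₂ f₂).inv ≫ ε₂.hom ▷ f₂) := by
  obtain ⟨z, p, q, hq, ⟨ζ⟩⟩ := h3 (v₁ ≫ u₁) (t₁ ≫ u₁) hv
  obtain ⟨z₁, r, hrG, μ₁, Lμ₁⟩ := iso_lift h1 h2 h3 h4 h5 hcofull (p ≫ v₁) (q ≫ t₁) u₁ hu₁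
    (α_ p v₁ u₁ ≪≫ ζ ≪≫ (α_ q t₁ u₁).symm)
  obtain ⟨z₂, r', hr'G, μ₂, Lμ₂⟩ := iso_lift h1 h2 h3 h4 h5 hcofull _ _ u₂ hu₂
    (α_ r (p ≫ v₂) u₂ ≪≫
      whiskerLeftIso r (α_ p v₂ u₂ ≪≫ whiskerLeftIso p αc.symm ≪≫ (α_ p v₁ u₁).symm) ≪≫
      (α_ r (p ≫ v₁) u₁).symm ≪≫ whiskerRightIso μ₁ u₁ ≪≫ α_ r (q ≫ t₁) u₁ ≪≫
      whiskerLeftIso r (α_ q t₁ u₁ ≪≫ whiskerLeftIso q γ ≪≫ (α_ q t₂ u₂).symm) ≪≫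
      (α_ r (q ≫ t₂) u₂).symm)
  obtain ⟨δ, hδ⟩ := lift3 hr'G.1 hrG.1 (hcofull q hq)
    ((α_ (r' ≫ r ≫ q) t₁ f₁).inv ≫
      (α_ r' (r ≫ p) v₁ ≪≫ whiskerLeftIso r' (α_ r p v₁) ≪≫ whiskerLeftIso r' μ₁ ≪≫
        whiskerLeftIso r' (α_ r q t₁).symm ≪≫ (α_ r' (r ≫ q) t₁).symm).inv ▷ f₁ ≫
      (α_ (r' ≫ r ≫ p) v₁ f₁).hom ≫ (r' ≫ r ≫ p) ◁ β ≫ (α_ (r' ≫ r ≫ p) v₂ f₂).inv ≫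
      (α_ r' (r ≫ p) v₂ ≪≫ whiskerLeftIso r' (α_ r p v₂) ≪≫ μ₂ ≪≫
        whiskerLeftIso r' (α_ r q t₂).symm ≪≫ (α_ r' (r ≫ q) t₂).symm).hom ▷ f₂ ≫
      (α_ (r' ≫ r ≫ q) t₂ f₂).hom)
  refine ⟨δ, z₂, r' ≫ r ≫ p, r' ≫ r ≫ q,
    α_ r' (r ≫ p) v₁ ≪≫ whiskerLeftIso r' (α_ r p v₁) ≪≫ whiskerLeftIso r' μ₁ ≪≫
      whiskerLeftIso r' (α_ r q t₁).symm ≪≫ (α_ r' (r ≫ q) t₁).symm,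
    α_ r' (r ≫ p) v₂ ≪≫ whiskerLeftIso r' (α_ r p v₂) ≪≫ μ₂ ≪≫
      whiskerLeftIso r' (α_ r q t₂).symm ≪≫ (α_ r' (r ≫ q) t₂).symm,
    ?_, core_E1 u₁ u₂ v₁ v₂ t₁ t₂ αc γ p q r r' μ₁ μ₂ Lμ₂, core_E2 β _ _ δ hδ⟩
  refine preW_iso h5 ?_ (hr'G.2 _ (hrG.2 _ (preW_comp h2 h3 h5 hq (preW_of_W h5 ht))))
  exact whiskerRightIso
    (α_ r' (r ≫ p) v₁ ≪≫ whiskerLeftIso r' (α_ r p v₁) ≪≫ whiskerLeftIso r' μ₁ ≪≫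
      whiskerLeftIso r' (α_ r q t₁).symm ≪≫ (α_ r' (r ≫ q) t₁).symm) u₁ ≪≫
    α_ (r' ≫ r ≫ q) t₁ u₁ ≪≫ α_ r' (r ≫ q) (t₁ ≫ u₁) ≪≫
    whiskerLeftIso r' (α_ r q (t₁ ≫ u₁))

end Frac5
theorem statement15 {B : Type u} [Bicategory.{w, v} B] (W : WClass B)
    (h1 : W.WB1) (h2 : W.WB2) (h3 : W.WB3) (h4 : W.WB4) (h5 : W.WB5)
    (hcofull : ∀ ⦃a b : B⦄ (f : a ⟶ b), W f → CoFull f)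
    {a b c₁ c₂ d e : B} (u₁ : c₁ ⟶ a) (f₁ : c₁ ⟶ b) (u₂ : c₂ ⟶ a) (f₂ : c₂ ⟶ b)
    (hu₁ : W u₁) (hu₂ : W u₂)
    (v₁ : d ⟶ c₁) (v₂ : d ⟶ c₂) (hv : W (v₁ ≫ u₁))
    (αc : v₁ ≫ u₁ ≅ v₂ ≫ u₂) (β : v₁ ≫ f₁ ⟶ v₂ ≫ f₂)
    (t₁ : e ⟶ c₁) (t₂ : e ⟶ c₂) (ht : W (t₁ ≫ u₁))
    (γ : t₁ ≫ u₁ ≅ t₂ ≫ u₂) :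
    ∃ δ : t₁ ≫ f₁ ⟶ t₂ ≫ f₂,
      DiagEquiv W u₁ f₁ u₂ f₂ v₁ v₂ αc β t₁ t₂ γ δ := by
  obtain ⟨δ, z₂, sL, tL, ε₁, ε₂, hPre, E1, E2⟩ :=
    main_core h1 h2 h3 h4 h5 hcofull u₁ f₁ u₂ f₂ hu₁ hu₂ v₁ v₂ hv αc β t₁ t₂ ht γ
  obtain ⟨e₃, U, hU⟩ := hPre
  refine ⟨δ, e₃, U ≫ sL, U ≫ tL,
    h5 _ _ hU ⟨whiskerRightIso (α_ U sL v₁) u₁ ≪≫ α_ U (sL ≫ v₁) u₁⟩,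
    α_ U sL v₁ ≪≫ whiskerLeftIso U ε₁ ≪≫ (α_ U tL t₁).symm,
    α_ U sL v₂ ≪≫ whiskerLeftIso U ε₂ ≪≫ (α_ U tL t₂).symm,
    refine_eq U ε₁ ε₂ E1, refine_eq U ε₁ ε₂ E2⟩
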